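/- In the base-station protocol with agent states {initial, red, blue} and rules as above (base station in {b_red, b_blue}, started in an arbitrary base-station state, all agents started in initial): in every reachable configuration, |#red − #blue| ≤ 1. Moreover, if a reachable configuration has #initial = 0, then no agent changes its state in any subsequent configuration. -/
import Mathlib


/-- Agent states. -/
inductive Ag : Type
  | initial | red | blue
deriving DecidableEq

/-- Base-station states. -/
inductive Bs : Type
  | bred | bblue
deriving DecidableEq

/-- Agent–agent transition rules (swaps with an initial-state agent; null otherwise). -/
def dAg : Ag → Ag → Ag × Ag
  | .blue, .initial => (.initial, .blue)
  | .initial, .blue => (.blue, .initial)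
  | .red, .initial  => (.initial, .red)
  | .initial, .red  => (.red, .initial)
  | p, q            => (p, q)

/-- Base-station–agent transition rules. -/
def dBs : Bs → Ag → Bs × Ag
  | .bred, .initial  => (.bblue, .red)
  | .bblue, .initial => (.bred, .blue)
  | s, a             => (s, a)

/-- A configuration: base-station state together with the agents' states. -/
abbrev Conf (n : ℕ) := Bs × (Fin n → Ag)

/-- One step: either the base station interacts with one agent,
or two distinct agents interact. -/
def Step {n : ℕ} (c c' : Conf n) : Prop :=
  (∃ i : Fin n, c'.1 = (dBs c.1 (c.2 i)).1 ∧
      c'.2 = Function.update c.2 i (dBs c.1 (c.2 i)).2) ∨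
  (c'.1 = c.1 ∧ ∃ i j : Fin n, i ≠ j ∧
      c'.2 = Function.update (Function.update c.2 i (dAg (c.2 i) (c.2 j)).1) j
        (dAg (c.2 i) (c.2 j)).2)

/-- Number of agents in state `s`. -/
def cnt {n : ℕ} (C : Fin n → Ag) (s : Ag) : ℕ :=
  (Finset.univ.filter fun a => C a = s).card

lemma cnt_update {n : ℕ} (C : Fin n → Ag) (i : Fin n) (v s : Ag) :
    cnt (Function.update C i v) s + (if C i = s then 1 else 0)
      = cnt C s + (if v = s then 1 else 0) := by
  have h1 : ∀ (D : Fin n → Ag), cnt D s = ∑ a, if D a = s then 1 else 0 :=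
    fun D => Finset.card_filter _ _
  rw [h1, h1]
  have h2 : (fun a => if Function.update C i v a = s then (1:ℕ) else 0)
      = Function.update (fun a => if C a = s then 1 else 0) i (if v = s then 1 else 0) := by
    funext a; by_cases h : a = i <;> simp [h, Function.update]
  rw [h2, Finset.sum_update_of_mem (Finset.mem_univ i),
    ← Finset.sum_erase_add Finset.univ _ (Finset.mem_univ i), Finset.erase_eq]
  ring

def g : Bs → ℤ
  | .bred => 0
  | .bblue => 1

lemma step_phi {n : ℕ} {c c' : Conf n} (h : Step c c') :
    (cnt c'.2 .red : ℤ) - cnt c'.2 .blue - g c'.1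
      = (cnt c.2 .red : ℤ) - cnt c.2 .blue - g c.1 := by
  rcases h with ⟨i, h1, h2⟩ | ⟨h1, i, j, hij, h2⟩
  · have hr := cnt_update c.2 i (dBs c.1 (c.2 i)).2 Ag.red
    have hbl := cnt_update c.2 i (dBs c.1 (c.2 i)).2 Ag.blue
    rw [← h2] at hr hbl
    cases hb : c.1 <;> cases ha : c.2 i <;>
      simp only [dBs, hb, ha] at h1 hr hbl <;>
      simp only [h1, hb, g] <;> simp at hr hbl <;> omega
  · have hji : j ≠ i := hij.symm
    have e : (Function.update c.2 i (dAg (c.2 i) (c.2 j)).1) j = c.2 j :=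
      Function.update_of_ne hji _ _
    have hr1 := cnt_update c.2 i (dAg (c.2 i) (c.2 j)).1 Ag.red
    have hr2 := cnt_update (Function.update c.2 i (dAg (c.2 i) (c.2 j)).1) j
      (dAg (c.2 i) (c.2 j)).2 Ag.red
    have hb1 := cnt_update c.2 i (dAg (c.2 i) (c.2 j)).1 Ag.blue
    have hb2 := cnt_update (Function.update c.2 i (dAg (c.2 i) (c.2 j)).1) j
      (dAg (c.2 i) (c.2 j)).2 Ag.blue
    rw [e] at hr2 hb2
    rw [← h2] at hr2 hb2
    rw [h1]
    generalize g c.1 = G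
    cases ha : c.2 i <;> cases hb : c.2 j <;>
      simp only [dAg, ha, hb] at hr1 hr2 hb1 hb2 <;>
      simp at hr1 hr2 hb1 hb2 <;> omega

lemma frozen {n : ℕ} {c c' : Conf n} (h : Step c c')
    (h0 : ∀ a, c.2 a ≠ Ag.initial) : c'.2 = c.2 := by
  rcases h with ⟨i, h1, h2⟩ | ⟨h1, i, j, hij, h2⟩
  · have hi := h0 i
    have hd : dBs c.1 (c.2 i) = (c.1, c.2 i) := by
      cases c.1 <;> cases ha : c.2 i <;> simp_all [dBs]
    rw [h2, hd]
    simp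
  · have hi := h0 i; have hj := h0 j
    have hd : dAg (c.2 i) (c.2 j) = (c.2 i, c.2 j) := by
      cases ha : c.2 i <;> cases hb : c.2 j <;> simp_all [dAg]
    rw [h2, hd]
    simp

lemma cnt_congr {n : ℕ} {C D : Fin n → Ag} (h : C = D) (s : Ag) : cnt C s = cnt D s := by
  rw [h]

theorem stmt10 (n : ℕ) (s0 : Bs) (c : Conf n)
    (h : Relation.ReflTransGen Step (s0, fun _ => Ag.initial) c) :
    (cnt c.2 .red ≤ cnt c.2 .blue + 1 ∧ cnt c.2 .blue ≤ cnt c.2 .red + 1) ∧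
    (cnt c.2 .initial = 0 →
      ∀ c' : Conf n, Relation.ReflTransGen Step c c' → c'.2 = c.2) := by
  constructor
  · have hphi : (cnt c.2 .red : ℤ) - cnt c.2 .blue - g c.1 = 0 - 0 - g s0 := by
      induction h with
      | refl => simp [cnt]
      | tail hab hstep ih => rw [step_phi hstep, ih]
    cases hc : c.1 <;> cases s0 <;> rw [hc] at hphi <;> simp [g] at hphi <;> omega
  · intro h0 c' h'
    have hno : ∀ a, c.2 a ≠ Ag.initial := by
      rw [cnt, Finset.card_eq_zero, Finset.filter_eq_empty_iff] at h0
      exact fun a ha => h0 (Finset.mem_univ a) ha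
    clear h h0
    induction h' with
    | refl => rfl
    | @tail b c'' hab hstep ih =>
      have hb : ∀ a, b.2 a ≠ Ag.initial := by rw [ih]; exact hno
      rw [frozen hstep hb, ih]
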